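/- The number of permutations τ ∈ S_k such that J(τ) = {0, 1, …, k} (i.e., all initial patterns of τ are involutions) equals 2^{k-1}, for k ≥ 1. -/

import Mathlib

open Equiv Finset

/-- The number of involutions in the symmetric group S_n. -/
def numInvolutions (n : ℕ) : ℕ :=
  (Finset.univ.filter fun π : Equiv.Perm (Fin n) => π * π = 1).card

/-- `π ∈ S_n` contains `τ ∈ S_k` as a subsequence. -/
def ContainsSubseq {n k : ℕ} (π : Equiv.Perm (Fin n)) (τ : Equiv.Perm (Fin k)) : Prop :=
  ∃ ι : Fin k → Fin n, StrictMono ι ∧ ∀ m : Fin k, (π (ι m) : ℕ) = (τ m : ℕ)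

/-- `p` is the pattern (order-preserving relabeling) of the word `w`. -/
def IsPattern {j : ℕ} {α : Type*} [LinearOrder α] (w : Fin j → α) (p : Equiv.Perm (Fin j)) : Prop :=
  ∀ a b : Fin j, p a ≤ p b ↔ w a ≤ w b

/-- The pattern of `τ_1 … τ_j` is an involution in S_j. -/
def InitPatternIsInvolution {k : ℕ} (τ : Equiv.Perm (Fin k)) (j : ℕ) : Prop :=
  ∃ hjk : j ≤ k, ∃ p : Equiv.Perm (Fin j),
    IsPattern (fun m : Fin j => τ (Fin.castLE hjk m)) p ∧ p * p = 1

/-- The j-set of `τ`. -/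
def JSet {k : ℕ} (τ : Equiv.Perm (Fin k)) : Set ℕ :=
  {0} ∪ {j | 1 ≤ j ∧ InitPatternIsInvolution τ j}

open scoped Classical in
/-- The j-set of `τ`, as a finset. -/
noncomputable def JFinset {k : ℕ} (τ : Equiv.Perm (Fin k)) : Finset ℕ :=
  (Finset.range (k + 1)).filter fun j => j ∈ JSet τ

/-- Concatenation of decreasing blocks of consecutive integers starting above `s`. -/
def layersFrom : ℕ → List ℕ → List ℕ
  | _, [] => []
  | s, a :: rest => ((List.range a).reverse.map fun t => s + t + 1) ++ layersFrom (s + a) rest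

/-- `τ` is a layered permutation. -/
def IsLayered {k : ℕ} (τ : Equiv.Perm (Fin k)) : Prop :=
  ∃ comp : List ℕ, (∀ a ∈ comp, 0 < a) ∧ comp.sum = k ∧
    List.ofFn (fun m : Fin k => (τ m : ℕ) + 1) = layersFrom 0 comp

open scoped Classical

lemma le_apply_of_strictMono {n : ℕ} (f : Fin n → Fin n) (hf : StrictMono f) :
    ∀ i : Fin n, (i : ℕ) ≤ f i := by
  have h1 : ∀ N : ℕ, ∀ m : Fin n, (m : ℕ) = N → (m : ℕ) ≤ f m := by
    intro N
    induction N using Nat.strong_induction_on with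
    | _ N ih =>
      intro m hm
      by_contra h
      push_neg at h
      have h2 : (f m) < m := by
        rw [Fin.lt_def]; omega
      have h3 := ih (f m) (by omega) (f m) rfl
      have h4 := hf h2
      rw [Fin.lt_def] at h4
      omega
  exact fun i => h1 i i rfl

lemma strictMono_fin_fix {n : ℕ} (f : Equiv.Perm (Fin n))
    (hf : StrictMono ⇑f) (i : Fin n) : f i = i := by
  have h2 : StrictMono ⇑f.symm := by
    intro a b hab
    rcases lt_trichotomy (f.symm a) (f.symm b) with h | h | h
    · exact h
    · exact absurd (congrArg f h) (by simpa using hab.ne)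
    · have h5 := hf h
      simp at h5
      exact absurd (h5.trans hab) (lt_irrefl _)
  have ha := le_apply_of_strictMono f hf i
  have hb := le_apply_of_strictMono f.symm h2 (f i)
  simp at hb
  exact Fin.le_antisymm (by omega) (by exact_mod_cast ha)

/-- patterns are unique -/
lemma pattern_unique {j : ℕ} (p q : Equiv.Perm (Fin j))
    (h : ∀ a b : Fin j, p a ≤ p b ↔ q a ≤ q b) : ∀ a, p a = q a := by
  have hsm : StrictMono ⇑(q.symm.trans p) := by
    intro a b hab
    have h0 : q (q.symm a) ≤ q (q.symm b) := by simpa using hab.le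
    rcases lt_or_eq_of_le ((h _ _).mpr h0) with h' | h'
    · exact h'
    · exfalso
      have h1 := p.injective h'
      have h2 := q.symm.injective h1
      rw [h2] at hab
      exact lt_irrefl _ hab
  intro a
  have := strictMono_fin_fix (q.symm.trans p) hsm (q a)
  simpa using this

/-- inversion pairs have exact value difference (additive form) -/
def Cword {j k : ℕ} (w : Fin j → Fin k) : Prop :=
  ∀ a b : Fin j, a < b → w b < w a → (w a : ℕ) + (a : ℕ) = (w b : ℕ) + (b : ℕ)

lemma cword_reversal {j k : ℕ} {w : Fin j → Fin k} (hw : Function.Injective w)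
    (hC : Cword w) {a b : Fin j} (hab : a < b) (hba : w b < w a) :
    ∀ l : Fin j, a ≤ l → l ≤ b → (w l : ℕ) + (l : ℕ) = (w a : ℕ) + (a : ℕ) := by
  intro l hal hlb
  have hab' := hC a b hab hba
  rcases eq_or_lt_of_le hal with h | hal'
  · rw [← h]
  rcases eq_or_lt_of_le hlb with h | hlb'
  · rw [h]; rw [Fin.lt_def] at *; omega
  -- a < l < b
  have h1 : w l < w a := by
    rcases lt_trichotomy (w l) (w a) with h | h | h
    · exact h
    · exact absurd (hw h) (ne_of_gt hal')
    · -- w a < w l : then inversion (l, b), contradiction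
      have h2 : w b < w l := lt_trans hba h
      have := hC l b hlb' h2
      rw [Fin.lt_def] at *
      omega
  have h3 : w b < w l := by
    rcases lt_trichotomy (w b) (w l) with h | h | h
    · exact h
    · exact absurd (hw h.symm) (fun hh => by rw [hh] at hlb'; exact lt_irrefl _ hlb')
    · -- w l < w b : inversion (a, l)
      have := hC a l hal' (lt_trans h hba)
      rw [Fin.lt_def] at *
      omega
  have := hC a l hal' h1
  omega

/-- A C-permutation is an involution. -/
lemma cword_involutive {k : ℕ} (τ : Equiv.Perm (Fin k)) (hC : Cword ⇑τ) :
    ∀ i, τ (τ i) = i := by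
  have main : ∀ N : ℕ, ∀ i : Fin k, (i : ℕ) = N → τ (τ i) = i := by
    intro N
    induction N using Nat.strong_induction_on with
    | _ N ih =>
      intro i hiN
      rcases lt_trichotomy (τ i) i with h | h | h
      · -- v < i : IH at v
        have h1 : τ (τ (τ i)) = τ i := ih (τ i) (by rw [Fin.lt_def] at h; omega) _ rfl
        have h2 : τ (τ i) = i := τ.injective h1
        exact h2
      · rw [h, h]
      · -- v > i: let p = τ.symm i
        set p := τ.symm i with hp
        have hpi : τ p = i := by simp [hp]
        rcases lt_trichotomy p i with h2 | h2 | h2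
        · have h3 : τ (τ p) = p := ih p (by rw [Fin.lt_def] at h2; omega) _ rfl
          rw [hpi] at h3
          rw [Fin.lt_def] at h h2
          rw [h3] at h
          omega
        · rw [← h2, hpi, h2] at h; exact absurd h (lt_irrefl _)
        · have h3 : τ p < τ i := by rw [hpi]; exact h
          have := hC i p h2 h3
          rw [hpi] at this
          have hvp : (τ i : ℕ) = (p : ℕ) := by rw [Fin.lt_def] at *; omega
          have : τ i = p := Fin.ext hvp
          rw [this, hpi]
  exact fun i => main i i rfl

/-- Existence of a pattern for an injective word. -/
lemma exists_pattern {j k : ℕ} (w : Fin j → Fin k) (hw : Function.Injective w) :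
    ∃ p : Equiv.Perm (Fin j), ∀ a b : Fin j, p a ≤ p b ↔ w a ≤ w b := by
  classical
  set s : Finset (Fin k) := Finset.univ.image w with hs
  have hcard : s.card = j := by
    rw [hs, Finset.card_image_of_injective _ hw, Finset.card_univ, Fintype.card_fin]
  set iso := s.orderIsoOfFin hcard
  have hmem : ∀ a : Fin j, w a ∈ s := fun a => Finset.mem_image_of_mem _ (Finset.mem_univ a)
  set p0 : Fin j → Fin j := fun a => iso.symm ⟨w a, hmem a⟩ with hp0
  have hiff : ∀ a b : Fin j, p0 a ≤ p0 b ↔ w a ≤ w b := by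
    intro a b
    rw [hp0]
    simp only [OrderIso.le_iff_le]
    exact Subtype.mk_le_mk
  have hinj : Function.Injective p0 := by
    intro a b hab
    have h1 : w a ≤ w b := (hiff a b).mp (le_of_eq hab)
    have h2 : w b ≤ w a := (hiff b a).mp (le_of_eq hab.symm)
    exact hw (le_antisymm h1 h2)
  exact ⟨Equiv.ofBijective p0 ((Finite.injective_iff_bijective).mp hinj), fun a b => hiff a b⟩

/-- The pattern of a C-word is itself a C-permutation. -/
lemma pattern_of_cword {j k : ℕ} {w : Fin j → Fin k} (hw : Function.Injective w)
    (hC : Cword w) {p : Equiv.Perm (Fin j)}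
    (hpat : ∀ a b : Fin j, p a ≤ p b ↔ w a ≤ w b) : Cword ⇑p := by
  have hlt : ∀ a b : Fin j, w a < w b ↔ p a < p b := by
    intro a b
    exact lt_iff_lt_of_le_iff_le ((hpat b a).symm)
  intro a b hab hba
  have hwba : w b < w a := (hlt b a).mpr hba
  have hrev := cword_reversal hw hC hab hwba
  have hj : 0 < j := Fin.pos a
  -- step lemma
  have step : ∀ l l' : Fin j, (l' : ℕ) = (l : ℕ) + 1 → (w l' : ℕ) + 1 = (w l : ℕ) →
      (p l : ℕ) = (p l' : ℕ) + 1 := by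
    intro l l' hll' hwstep
    have h1 : p l' < p l := by
      rw [← hlt]; rw [Fin.lt_def]; omega
    by_contra hne
    have h2 : (p l' : ℕ) + 1 < (p l : ℕ) := by rw [Fin.lt_def] at h1; omega
    have h3 : (p l' : ℕ) + 1 < j := lt_trans h2 (p l).isLt
    set c := p.symm ⟨(p l' : ℕ) + 1, h3⟩ with hc
    have hpc : (p c : ℕ) = (p l' : ℕ) + 1 := by rw [hc]; simp
    have h4 : w l' < w c := by rw [hlt]; rw [Fin.lt_def]; omega
    have h5 : w c < w l := by rw [hlt]; rw [Fin.lt_def]; omega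
    rw [Fin.lt_def] at h4 h5
    omega
  -- induction along the interval
  have key : ∀ d : ℕ, d ≤ (b : ℕ) - (a : ℕ) →
      (p ⟨(b : ℕ) - d, by omega⟩ : ℕ) = (p b : ℕ) + d := by
    intro d
    induction d with
    | zero =>
      intro _
      have hbb : (⟨(b : ℕ) - 0, by omega⟩ : Fin j) = b := Fin.ext (by simp)
      rw [hbb]
      omega
    | succ d ihd =>
      intro hd
      have hab' : (a : ℕ) < (b : ℕ) := by rw [Fin.lt_def] at hab; exact hab
      set l : Fin j := ⟨(b : ℕ) - (d + 1), by omega⟩ with hl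
      set l' : Fin j := ⟨(b : ℕ) - d, by omega⟩ with hl'
      have hll' : (l' : ℕ) = (l : ℕ) + 1 := by rw [hl, hl']; simp; omega
      have hwl := hrev l (by rw [Fin.le_def]; show (a : ℕ) ≤ (b : ℕ) - (d+1); omega)
        (by rw [Fin.le_def]; show (b : ℕ) - (d+1) ≤ (b : ℕ); omega)
      have hwl' := hrev l' (by rw [Fin.le_def]; show (a : ℕ) ≤ (b : ℕ) - d; omega)
        (by rw [Fin.le_def]; show (b : ℕ) - d ≤ (b : ℕ); omega)
      have hstep := step l l' hll' (by omega)
      have := ihd (by omega)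
      omega
  have hfin := key ((b : ℕ) - (a : ℕ)) le_rfl
  have haa : (⟨(b : ℕ) - ((b : ℕ) - (a : ℕ)), by omega⟩ : Fin j) = a := by
    apply Fin.ext
    simp
    rw [Fin.lt_def] at hab
    omega
  rw [haa] at hfin
  rw [Fin.lt_def] at hab
  omega

lemma cword_initPattern {k : ℕ} (τ : Equiv.Perm (Fin k)) (hC : Cword ⇑τ)
    {j : ℕ} (hj : j ≤ k) : InitPatternIsInvolution τ j := by
  set w : Fin j → Fin k := fun m => τ (Fin.castLE hj m) with hwdef
  have hw : Function.Injective w := by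
    intro a b hab
    have h := τ.injective hab
    have h2 := congrArg Fin.val h
    simp at h2
    exact Fin.ext h2
  have hCw : Cword w := by
    intro a b hab hba
    have h := hC (Fin.castLE hj a) (Fin.castLE hj b) (by rw [Fin.lt_def] at *; exact hab) hba
    simpa using h
  obtain ⟨p, hp⟩ := exists_pattern w hw
  refine ⟨hj, p, hp, ?_⟩
  have hCp := pattern_of_cword hw hCw hp
  have hinv := cword_involutive p hCp
  ext x
  simp [hinv x]

lemma KL {m : ℕ} (σ : Equiv.Perm (Fin (m+1))) (hinv : ∀ i, σ (σ i) = i)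
    (q : Equiv.Perm (Fin m)) (hq : Cword ⇑q)
    (hpat : ∀ a b : Fin m, q a ≤ q b ↔ σ (Fin.castSucc a) ≤ σ (Fin.castSucc b)) :
    Cword ⇑σ := by
  set v : ℕ := (σ (Fin.last m) : ℕ) with hv
  have hvm' : v ≤ m := by rw [hv]; exact Fin.is_le _
  have hne : ∀ a : Fin m, (σ (Fin.castSucc a) : ℕ) ≠ v := by
    intro a h
    have h2 : σ (Fin.castSucc a) = σ (Fin.last m) := Fin.ext h
    have h3 := σ.injective h2
    have h4 := congrArg Fin.val h3
    simp [Fin.val_last] at h4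
    have := a.isLt
    omega
  have hqlt : ∀ a b : Fin m, q a < q b ↔ σ (Fin.castSucc a) < σ (Fin.castSucc b) :=
    fun a b => lt_iff_lt_of_le_iff_le (hpat b a)
  -- rank relation
  have qrel : ∀ a : Fin m, (q a : ℕ) =
      if (σ (Fin.castSucc a) : ℕ) < v then (σ (Fin.castSucc a) : ℕ)
      else (σ (Fin.castSucc a) : ℕ) - 1 := by
    set r : Fin m → Fin m := fun a =>
      if h : (σ (Fin.castSucc a) : ℕ) < v then ⟨(σ (Fin.castSucc a) : ℕ), by
        have h1 := (σ (Fin.castSucc a)).isLt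
        have h2 := hne a
        omega⟩
      else ⟨(σ (Fin.castSucc a) : ℕ) - 1, by
        have h1 := (σ (Fin.castSucc a)).isLt
        have h2 := hne a
        omega⟩ with hr
    have hrval : ∀ a : Fin m, (r a : ℕ) =
        if (σ (Fin.castSucc a) : ℕ) < v then (σ (Fin.castSucc a) : ℕ)
        else (σ (Fin.castSucc a) : ℕ) - 1 := by
      intro a
      rw [hr]
      split_ifs with h
      · simp [h]
      · simp [h]
    have hriff : ∀ a b : Fin m, r a ≤ r b ↔ σ (Fin.castSucc a) ≤ σ (Fin.castSucc b) := by
      intro a b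
      rw [Fin.le_def, Fin.le_def, hrval a, hrval b]
      have h1 := hne a
      have h2 := hne b
      split_ifs with ha hb hb <;> omega
    have hrinj : Function.Injective r := by
      intro a b hab
      have h1 : σ (Fin.castSucc a) ≤ σ (Fin.castSucc b) := (hriff a b).mp (le_of_eq hab)
      have h2 : σ (Fin.castSucc b) ≤ σ (Fin.castSucc a) := (hriff b a).mp (le_of_eq hab.symm)
      have h3 := σ.injective (le_antisymm h1 h2)
      exact Fin.castSucc_injective m h3
    set rp : Equiv.Perm (Fin m) := Equiv.ofBijective r (Finite.injective_iff_bijective.mp hrinj)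
      with hrp
    have hqr : ∀ a, q a = rp a := by
      apply pattern_unique
      intro a b
      rw [hpat a b]
      have : rp a ≤ rp b ↔ r a ≤ r b := Iff.rfl
      rw [this, hriff]
    intro a
    rw [hqr a]
    have : rp a = r a := rfl
    rw [this, hrval a]
  have hvltiff : ∀ a : Fin m, ((q a : ℕ) < v ↔ (σ (Fin.castSucc a) : ℕ) < v) := by
    intro a
    have h1 := qrel a
    have h2 := hne a
    split_ifs at h1 <;> omega
  rcases eq_or_lt_of_le hvm' with hvm | hvm
  · -- v = m : σ fixes the last point
    intro a b hab hba
    have hbm : (b : ℕ) < m := by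
      by_contra h
      push_neg at h
      have hbl : b = Fin.last m := Fin.ext (by simp [Fin.val_last]; omega)
      rw [hbl] at hba
      have := (σ a).isLt
      rw [Fin.lt_def] at hba
      omega
    have ham : (a : ℕ) < m := by rw [Fin.lt_def] at hab; omega
    set a' : Fin m := ⟨(a : ℕ), ham⟩
    set b' : Fin m := ⟨(b : ℕ), hbm⟩
    have hca : Fin.castSucc a' = a := Fin.ext rfl
    have hcb : Fin.castSucc b' = b := Fin.ext rfl
    have hq1 : (q a' : ℕ) = (σ a : ℕ) := by
      have := qrel a'
      rw [hca] at this
      have h2 := hne a'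
      rw [hca] at h2
      have := (σ a).isLt
      split_ifs at * <;> omega
    have hq2 : (q b' : ℕ) = (σ b : ℕ) := by
      have := qrel b'
      rw [hcb] at this
      have h2 := hne b'
      rw [hcb] at h2
      have := (σ b).isLt
      split_ifs at * <;> omega
    have hinvq : q b' < q a' := by
      rw [Fin.lt_def, hq1, hq2]
      exact hba
    have := hq a' b' (by rw [Fin.lt_def]; exact hab) hinvq
    rw [Fin.lt_def] at *
    have ha'v : (a' : ℕ) = a := rfl
    have hb'v : (b' : ℕ) = b := rfl
    omega
  · -- v < m
    set v' : Fin m := ⟨v, hvm⟩ with hv'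
    have hσv : (σ (Fin.castSucc v') : ℕ) = m := by
      have h1 := hinv (Fin.last m)
      have h2 : σ (Fin.last m) = ⟨v, by omega⟩ := Fin.ext rfl
      rw [h2] at h1
      have h3 : Fin.castSucc v' = ⟨v, by omega⟩ := Fin.ext rfl
      rw [h3, h1]
      simp [Fin.val_last]
    have hqv : (q v' : ℕ) = m - 1 := by
      have h1 := qrel v'
      rw [hσv] at h1
      rw [h1]
      simp
      omega
    have hstr : ∀ l : Fin m, v ≤ (l : ℕ) → (σ (Fin.castSucc l) : ℕ) = m + v - (l : ℕ) := by
      intro l hl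
      rcases eq_or_lt_of_le hl with h | h
      · have : l = v' := Fin.ext h.symm
        rw [this, hσv]
        omega
      · -- v < l
        have hlt1 : σ (Fin.castSucc l) < σ (Fin.castSucc v') := by
          rw [Fin.lt_def, hσv]
          have h1 := (σ (Fin.castSucc l)).isLt
          have h2 : σ (Fin.castSucc l) ≠ σ (Fin.castSucc v') := by
            intro hh
            have := σ.injective hh
            have := congrArg Fin.val (Fin.castSucc_injective m this)
            have hv'v : (v' : ℕ) = v := rfl
            omega
          have h3 : (σ (Fin.castSucc l) : ℕ) ≠ m := by
            intro hh
            exact h2 (Fin.ext (by rw [hh, hσv]))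
          omega
        have hinvq : q l < q v' := (hqlt l v').mpr hlt1
        have h4 := hq v' l (by rw [Fin.lt_def]; exact h) hinvq
        have h5 : (q l : ℕ) + (l : ℕ) = m - 1 + v := by
          rw [Fin.lt_def] at hinvq
          have hv'v : (v' : ℕ) = v := rfl
          omega
        have h6 : v ≤ (q l : ℕ) := by
          have := l.isLt
          omega
        have h7 : ¬ ((σ (Fin.castSucc l) : ℕ) < v) := by
          rw [← hvltiff l]
          omega
        have h8 := qrel l
        rw [if_neg h7] at h8
        have h9 := hne l
        omega
    have hpos : ∀ a : Fin (m+1), v < (σ a : ℕ) →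
        v ≤ (a : ℕ) ∧ (a : ℕ) < m ∧ (σ a : ℕ) = m + v - (a : ℕ) := by
      intro a ha
      have ham : (a : ℕ) < m := by
        by_contra h
        push_neg at h
        have : a = Fin.last m := Fin.ext (by simp [Fin.val_last]; omega)
        rw [this] at ha
        omega
      have hσa := (σ a).isLt
      set l : ℕ := m + v - (σ a : ℕ) with hl
      have hlv : v ≤ l := by omega
      have hlm : l < m := by omega
      have h1 := hstr ⟨l, hlm⟩ (by simpa using hlv)
      have h2 : (σ (Fin.castSucc ⟨l, hlm⟩) : ℕ) = (σ a : ℕ) := by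
        rw [h1]; simp only [Fin.val_mk]; omega
      have h3 : Fin.castSucc ⟨l, hlm⟩ = a := σ.injective (Fin.ext h2)
      have h4 := congrArg Fin.val h3
      simp at h4
      refine ⟨by omega, ham, by omega⟩
    -- main goal
    intro a b hab hba
    rw [Fin.lt_def] at hab
    rcases Nat.lt_or_ge (b : ℕ) m with hbm | hbm
    · -- b < m
      have ham : (a : ℕ) < m := by omega
      set a' : Fin m := ⟨(a : ℕ), ham⟩
      set b' : Fin m := ⟨(b : ℕ), hbm⟩
      have hca : Fin.castSucc a' = a := Fin.ext rfl
      have hcb : Fin.castSucc b' = b := Fin.ext rfl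
      have hqa := qrel a'
      have hqb := qrel b'
      rw [hca] at hqa
      rw [hcb] at hqb
      have hnea := hne a'
      have hneb := hne b'
      rw [hca] at hnea
      rw [hcb] at hneb
      have hinvq : q b' < q a' := by
        have := (hqlt b' a').mpr (by rw [hca, hcb]; exact hba)
        exact this
      have h4 := hq a' b' (by rw [Fin.lt_def]; exact hab) hinvq
      have ha'v : (a' : ℕ) = a := rfl
      have hb'v : (b' : ℕ) = b := rfl
      rw [Fin.lt_def] at hba
      rcases Nat.lt_or_ge (σ a : ℕ) v with hav | hav
      · -- σ a < v, σ b < v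
        rw [if_pos (by omega : (σ a:ℕ) < v)] at hqa
        rw [if_pos (by omega : (σ b:ℕ) < v)] at hqb
        omega
      · have hav' : v < (σ a : ℕ) := by omega
        rcases Nat.lt_or_ge (σ b : ℕ) v with hbv | hbv
        · -- σ b < v < σ a : contradiction
          exfalso
          have h5 := hpos a hav'
          have h6 : v ≤ (b : ℕ) := by omega
          have h7 := hstr b' (by simpa using h6)
          rw [hcb] at h7
          omega
        · rw [if_neg (by omega : ¬ (σ a:ℕ) < v)] at hqa
          rw [if_neg (by omega : ¬ (σ b:ℕ) < v)] at hqb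
          omega
    · -- b = last
      have hbl : b = Fin.last m := Fin.ext (by simp [Fin.val_last]; omega)
      have hσb : (σ b : ℕ) = v := by rw [hbl]
      rw [Fin.lt_def, hσb] at hba
      have h5 := hpos a hba
      rw [hbl]
      simp [Fin.val_last]
      omega

lemma full_j_to_C {k : ℕ} (τ : Equiv.Perm (Fin k))
    (H : ∀ j, 1 ≤ j → j ≤ k → InitPatternIsInvolution τ j) : Cword ⇑τ := by
  have main : ∀ j, ∀ hj : j ≤ k, ∀ p : Equiv.Perm (Fin j),
      IsPattern (fun m : Fin j => τ (Fin.castLE hj m)) p → Cword ⇑p := by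
    intro j
    induction j with
    | zero =>
      intro hj p hp a b hab
      exact absurd a.isLt (by omega)
    | succ j ihj =>
      intro hj p hp
      obtain ⟨hjk', p', hp', hp'inv⟩ := H (j+1) (by omega) hj
      have hpp' : ∀ a, p a = p' a := by
        apply pattern_unique
        intro a b
        rw [hp a b, hp' a b]
      have hpinv : ∀ i, p (p i) = i := by
        intro i
        rw [hpp' (p i), hpp' i]
        have := congrArg (fun f : Equiv.Perm (Fin (j+1)) => f i) hp'inv
        simpa [Equiv.Perm.mul_apply] using this
      rcases Nat.eq_zero_or_pos j with hj0 | hj0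
      · subst hj0
        intro a b hab hba
        rw [Fin.lt_def] at hab
        have ha := a.isLt
        have hb := b.isLt
        interval_cases ha' : (a : ℕ) <;> interval_cases hb' : (b : ℕ) <;> omega
      · obtain ⟨hjk2, q, hqpat, _⟩ := H j hj0 (by omega)
        have hCq : Cword ⇑q := ihj hjk2 q hqpat
        apply KL p hpinv q hCq
        intro a b
        have h1 : q a ≤ q b ↔ τ (Fin.castLE hjk2 a) ≤ τ (Fin.castLE hjk2 b) := hqpat a b
        have h2 : p (Fin.castSucc a) ≤ p (Fin.castSucc b) ↔
            τ (Fin.castLE hj (Fin.castSucc a)) ≤ τ (Fin.castLE hj (Fin.castSucc b)) :=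
          hp (Fin.castSucc a) (Fin.castSucc b)
        have e1 : Fin.castLE hj (Fin.castSucc a) = Fin.castLE hjk2 a := Fin.ext rfl
        have e2 : Fin.castLE hj (Fin.castSucc b) = Fin.castLE hjk2 b := Fin.ext rfl
        rw [e1, e2] at h2
        exact h1.trans h2.symm
  have hself : IsPattern (fun m : Fin k => τ (Fin.castLE (le_refl k) m)) τ := by
    intro a b
    have e : Fin.castLE (le_refl k) a = a := Fin.ext rfl
    have e2 : Fin.castLE (le_refl k) b = b := Fin.ext rfl
    show τ a ≤ τ b ↔ τ (Fin.castLE (le_refl k) a) ≤ τ (Fin.castLE (le_refl k) b)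
    rw [e, e2]
  exact main k (le_refl k) τ hself

def cutP (D : Finset ℕ) (b : ℕ) : Prop := b = 0 ∨ (b - 1) ∉ D

noncomputable def startF (D : Finset ℕ) (i : ℕ) : ℕ := sSup {b | b ≤ i ∧ cutP D b}
noncomputable def endF (D : Finset ℕ) (i : ℕ) : ℕ := sInf {b | i < b ∧ cutP D b}
noncomputable def fF (D : Finset ℕ) (i : ℕ) : ℕ := startF D i + endF D i - 1 - i

lemma startF_set_nonempty (D : Finset ℕ) (i : ℕ) : {b | b ≤ i ∧ cutP D b}.Nonempty :=
  ⟨0, Nat.zero_le i, Or.inl rfl⟩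

lemma startF_set_bdd (D : Finset ℕ) (i : ℕ) : BddAbove {b | b ≤ i ∧ cutP D b} :=
  ⟨i, fun _ hx => hx.1⟩

lemma startF_spec (D : Finset ℕ) (i : ℕ) : startF D i ≤ i ∧ cutP D (startF D i) :=
  Nat.sSup_mem (startF_set_nonempty D i) (startF_set_bdd D i)

lemma le_startF (D : Finset ℕ) {i b : ℕ} (hb : b ≤ i) (hc : cutP D b) : b ≤ startF D i :=
  le_csSup (startF_set_bdd D i) ⟨hb, hc⟩

lemma cutP_k {k : ℕ} {D : Finset ℕ} (hD : D ⊆ range (k - 1)) : cutP D k := by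
  rcases Nat.eq_zero_or_pos k with h | h
  · exact Or.inl h
  · refine Or.inr fun h2 => ?_
    have := mem_range.mp (hD h2)
    omega

lemma endF_set_nonempty {k : ℕ} {D : Finset ℕ} (hD : D ⊆ range (k - 1)) {i : ℕ} (hi : i < k) :
    {b | i < b ∧ cutP D b}.Nonempty :=
  ⟨k, hi, cutP_k hD⟩

lemma endF_spec {k : ℕ} {D : Finset ℕ} (hD : D ⊆ range (k - 1)) {i : ℕ} (hi : i < k) :
    i < endF D i ∧ cutP D (endF D i) :=
  Nat.sInf_mem (endF_set_nonempty hD hi)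

lemma endF_le (D : Finset ℕ) {i b : ℕ} (hb : i < b) (hc : cutP D b) : endF D i ≤ b :=
  Nat.sInf_le ⟨hb, hc⟩

lemma endF_le_k {k : ℕ} {D : Finset ℕ} (hD : D ⊆ range (k - 1)) {i : ℕ} (hi : i < k) :
    endF D i ≤ k :=
  endF_le D hi (cutP_k hD)

lemma nocut (D : Finset ℕ) {i b : ℕ} (h1 : startF D i < b) (h2 : b < endF D i) :
    ¬ cutP D b := by
  intro hc
  rcases le_or_gt b i with h | h
  · exact absurd (le_startF D h hc) (by omega)
  · exact absurd (endF_le D h hc) (by omega)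

lemma block {k : ℕ} {D : Finset ℕ} (hD : D ⊆ range (k - 1)) {i j : ℕ} (hik : i < k)
    (hsj : startF D i ≤ j) (hje : j < endF D i) (hjk : j < k) :
    startF D j = startF D i ∧ endF D j = endF D i := by
  have hs := startF_spec D i
  constructor
  · apply le_antisymm
    · apply csSup_le (startF_set_nonempty D j)
      intro b hb
      have hb1 := hb.1
      by_contra hcon
      push_neg at hcon
      exact nocut D hcon (by omega : b < endF D i) hb.2
    · exact le_startF D hsj hs.2
  · apply le_antisymm
    · exact endF_le D hje (endF_spec hD hik).2
    · apply le_csInf (endF_set_nonempty hD hjk)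
      intro b hb
      have hb1 := hb.1
      by_contra hcon
      push_neg at hcon
      exact nocut D (by omega : startF D i < b) hcon hb.2

lemma fF_mem {k : ℕ} {D : Finset ℕ} (hD : D ⊆ range (k - 1)) {i : ℕ} (hi : i < k) :
    startF D i ≤ fF D i ∧ fF D i < endF D i := by
  have h1 := startF_spec D i
  have h2 := endF_spec hD hi
  unfold fF
  omega

lemma fF_lt_k {k : ℕ} {D : Finset ℕ} (hD : D ⊆ range (k - 1)) {i : ℕ} (hi : i < k) :
    fF D i < k := by
  have h1 := fF_mem hD hi
  have h2 := endF_le_k hD hi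
  omega

lemma fF_invol {k : ℕ} {D : Finset ℕ} (hD : D ⊆ range (k - 1)) {i : ℕ} (hi : i < k) :
    fF D (fF D i) = i := by
  have h1 := fF_mem hD hi
  have h2 := startF_spec D i
  have h3 := endF_spec hD hi
  have h4 := block hD hi h1.1 h1.2 (fF_lt_k hD hi)
  unfold fF at *
  omega

noncomputable def FD (D : Finset ℕ) {k : ℕ} (hD : D ⊆ range (k - 1)) : Equiv.Perm (Fin k) :=
  Function.Involutive.toPerm (fun i => ⟨fF D (i : ℕ), fF_lt_k hD i.isLt⟩)
    (fun i => Fin.ext (fF_invol hD i.isLt))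

lemma FD_apply (D : Finset ℕ) {k : ℕ} (hD : D ⊆ range (k - 1)) (i : Fin k) :
    (FD D hD i : ℕ) = fF D (i : ℕ) := rfl

lemma FD_cword {k : ℕ} {D : Finset ℕ} (hD : D ⊆ range (k - 1)) : Cword ⇑(FD D hD) := by
  intro a b hab hba
  rw [Fin.lt_def] at hab hba
  rw [FD_apply, FD_apply] at hba ⊢
  have hsa := startF_spec D (a : ℕ)
  have hea := endF_spec hD a.isLt
  have hb : (b : ℕ) < endF D (a : ℕ) := by
    by_contra h
    push_neg at h
    have h1 : endF D (a : ℕ) ≤ startF D (b : ℕ) := le_startF D h hea.2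
    have h2 := fF_mem hD b.isLt
    have h3 := fF_mem hD a.isLt
    omega
  have h4 := block hD a.isLt (by omega : startF D (a:ℕ) ≤ (b:ℕ)) hb b.isLt
  unfold fF at *
  omega

lemma FD_descent {k : ℕ} {D : Finset ℕ} (hD : D ⊆ range (k - 1)) (i : ℕ) (hi : i + 1 < k) :
    (fF D (i + 1) < fF D i ↔ i ∈ D) := by
  by_cases hc : cutP D (i + 1)
  · have hiD : i ∉ D := by
      rcases hc with h | h
      · omega
      · simpa using h
    have he : endF D i = i + 1 :=
      le_antisymm (endF_le D (by omega) hc) (endF_spec hD (by omega : i < k)).1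
    have hs := startF_spec D i
    have h1 : fF D i ≤ i := by unfold fF; omega
    have h2 : i + 1 ≤ startF D (i+1) := le_startF D (le_refl _) hc
    have h3 := fF_mem hD hi
    constructor
    · intro h; omega
    · intro h; exact absurd h hiD
  · have hiD : i ∈ D := by
      unfold cutP at hc
      push_neg at hc
      simpa using hc.2
    have he := endF_spec hD (by omega : i < k)
    have he2 : i + 1 < endF D i := by
      rcases Nat.lt_or_ge (i+1) (endF D i) with h | h
      · exact h
      · exfalso
        have heq : endF D i = i + 1 := by omega
        rw [heq] at he
        exact hc he.2
    have h4 := block hD (by omega : i < k) (by have := startF_spec D i; omega : startF D i ≤ i + 1) he2 hi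
    have hs := startF_spec D i
    constructor
    · intro _; exact hiD
    · intro _
      unfold fF
      rw [h4.1, h4.2]
      omega

/-- descent at position i (between i and i+1) -/
def descentP {k : ℕ} (τ : Equiv.Perm (Fin k)) (i : ℕ) : Prop :=
  ∃ h : i + 1 < k, (τ ⟨i+1, h⟩ : ℕ) < (τ ⟨i, Nat.lt_of_succ_lt h⟩ : ℕ)

noncomputable def descSet {k : ℕ} (τ : Equiv.Perm (Fin k)) : Finset ℕ :=
  (range (k-1)).filter (descentP τ)

lemma descSet_subset {k : ℕ} (τ : Equiv.Perm (Fin k)) : descSet τ ⊆ range (k-1) :=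
  filter_subset _ _

lemma mem_descSet {k : ℕ} (τ : Equiv.Perm (Fin k)) {i : ℕ} (hi : i + 1 < k) :
    i ∈ descSet τ ↔ (τ ⟨i+1, hi⟩ : ℕ) < (τ ⟨i, by omega⟩ : ℕ) := by
  unfold descSet
  rw [mem_filter, mem_range]
  constructor
  · rintro ⟨-, h, hlt⟩
    exact hlt
  · intro h
    exact ⟨by omega, hi, h⟩

/-- an ascent is a breakpoint -/
lemma breakpoint {k : ℕ} (τ : Equiv.Perm (Fin k)) (hC : Cword ⇑τ) {i : ℕ} (hi : i + 1 < k)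
    (hasc : (τ ⟨i, by omega⟩ : ℕ) < (τ ⟨i+1, hi⟩ : ℕ)) :
    (∀ a : Fin k, (a : ℕ) ≤ i → (τ a : ℕ) ≤ i) ∧
    (∀ b : Fin k, i < (b : ℕ) → i < (τ b : ℕ)) := by
  have nocross : ∀ a b : Fin k, (a : ℕ) ≤ i → i < (b : ℕ) → (τ a : ℕ) < τ b := by
    intro a b ha hb
    rcases lt_trichotomy (τ a) (τ b) with h | h | h
    · rw [Fin.lt_def] at h; exact h
    · exfalso
      have := τ.injective h
      subst this
      omega
    · exfalso
      have hab : a < b := by rw [Fin.lt_def]; omega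
      have hrev := cword_reversal τ.injective hC hab h
      have h1 := hrev ⟨i, by omega⟩ (by rw [Fin.le_def]; simpa using ha)
        (by rw [Fin.le_def]; simp; omega)
      have h2 := hrev ⟨i+1, hi⟩ (by rw [Fin.le_def]; simp; omega)
        (by rw [Fin.le_def]; simpa using hb)
      simp only [Fin.val_mk] at h1 h2
      omega
  have hik : i < k := by omega
  set ii : Fin k := ⟨i, hik⟩ with hii
  have bp1 : ∀ a : Fin k, (a : ℕ) ≤ i → (τ a : ℕ) ≤ i := by
    intro a ha
    by_contra hcon
    push_neg at hcon
    -- all values ≤ i are at positions ≤ i, via τ.symm image argument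
    by_cases hex : ∃ y : Fin k, (y : ℕ) ≤ i ∧ i < (τ.symm y : ℕ)
    · obtain ⟨y, hy1, hy2⟩ := hex
      have := nocross a (τ.symm y) ha hy2
      simp at this
      omega
    · push_neg at hex
      have hmap : ∀ y : Fin k, y ∈ Finset.Iic ii → τ.symm y ∈ Finset.Iic ii := by
        intro y hy
        rw [mem_Iic] at *
        rw [Fin.le_def] at *
        exact hex y hy
      have himg : (Finset.Iic ii).image ⇑τ.symm = Finset.Iic ii := by
        apply Finset.eq_of_subset_of_card_le
        · intro x hx
          rw [Finset.mem_image] at hx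
          obtain ⟨y, hy, rfl⟩ := hx
          exact hmap y hy
        · rw [Finset.card_image_of_injective _ τ.symm.injective]
      have hmem : a ∈ (Finset.Iic ii).image ⇑τ.symm := by
        rw [himg, mem_Iic, Fin.le_def]
        exact ha
      rw [Finset.mem_image] at hmem
      obtain ⟨y, hy, hya⟩ := hmem
      have hval : τ a = y := by rw [← hya]; simp
      have hval2 := congrArg Fin.val hval
      rw [mem_Iic, Fin.le_def, hii] at hy
      simp only [Fin.val_mk] at hy
      omega
  refine ⟨bp1, ?_⟩
  intro b hb
  by_contra hcon
  push_neg at hcon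
  have hmap : ∀ y : Fin k, y ∈ Finset.Iic ii → τ y ∈ Finset.Iic ii := by
    intro y hy
    rw [mem_Iic] at *
    rw [Fin.le_def] at *
    exact bp1 y hy
  have himg : (Finset.Iic ii).image ⇑τ = Finset.Iic ii := by
    apply Finset.eq_of_subset_of_card_le
    · intro x hx
      rw [Finset.mem_image] at hx
      obtain ⟨y, hy, rfl⟩ := hx
      exact hmap y hy
    · rw [Finset.card_image_of_injective _ τ.injective]
  have hmem : τ b ∈ (Finset.Iic ii).image ⇑τ := by
    rw [himg, mem_Iic, Fin.le_def]
    exact hcon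
  rw [Finset.mem_image] at hmem
  obtain ⟨y, hy, hyb⟩ := hmem
  have heq : y = b := τ.injective hyb
  have hval2 := congrArg Fin.val heq
  rw [mem_Iic, Fin.le_def, hii] at hy
  simp only [Fin.val_mk] at hy
  omega

lemma cword_formula {k : ℕ} (τ : Equiv.Perm (Fin k)) (hC : Cword ⇑τ) (i : Fin k) :
    (τ i : ℕ) = fF (descSet τ) (i : ℕ) := by
  set D := descSet τ with hDdef
  have hD : D ⊆ range (k-1) := descSet_subset τ
  obtain ⟨s, hs⟩ : ∃ s, startF D (i : ℕ) = s := ⟨_, rfl⟩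
  obtain ⟨e, he⟩ : ∃ e, endF D (i : ℕ) = e := ⟨_, rfl⟩
  have hss := startF_spec D (i : ℕ)
  have hes := endF_spec hD i.isLt
  have hek := endF_le_k hD i.isLt
  rw [hs] at hss
  rw [he] at hes hek
  have hik := i.isLt
  -- ascent lemma from cut
  have asc_of_cut : ∀ c : ℕ, 1 ≤ c → cutP D c → ∀ hck : c < k,
      (τ ⟨c-1, Nat.lt_of_le_of_lt (Nat.sub_le c 1) hck⟩ : ℕ) < (τ ⟨c, hck⟩ : ℕ) := by
    intro c hc1 hcut hck
    have h1 : c - 1 + 1 < k := by omega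
    have hnd : c - 1 ∉ D := by
      rcases hcut with h | h
      · omega
      · exact h
    rw [hDdef] at hnd
    rw [mem_descSet τ h1] at hnd
    push_neg at hnd
    have hne : τ ⟨c-1, by omega⟩ ≠ τ ⟨c-1+1, h1⟩ := by
      intro hh
      have := τ.injective hh
      have h9 := congrArg Fin.val this
      simp only [Fin.val_mk] at h9
      omega
    have hne2 : (τ ⟨c-1, by omega⟩ : ℕ) ≠ (τ ⟨c-1+1, h1⟩ : ℕ) := fun hh => hne (Fin.ext hh)
    have heq : (⟨c-1+1, h1⟩ : Fin k) = ⟨c, hck⟩ := Fin.ext (by simp; omega)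
    rw [heq] at hnd hne2
    omega
  have fact1 : ∀ b : Fin k, s ≤ (b : ℕ) → s ≤ (τ b : ℕ) := by
    intro b hb
    rcases Nat.eq_zero_or_pos s with h0 | h0
    · omega
    · have hsk : s < k := by omega
      have hasc := asc_of_cut s h0 hss.2 hsk
      have hbp := (breakpoint τ hC (by omega : s - 1 + 1 < k)
        (by
          have heq : (⟨s-1+1, by omega⟩ : Fin k) = ⟨s, hsk⟩ := Fin.ext (by simp; omega)
          rw [heq]
          exact hasc)).2
      have := hbp b (by omega)
      omega
  have fact2 : ∀ a : Fin k, (a : ℕ) < e → (τ a : ℕ) < e := by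
    intro a ha
    rcases eq_or_lt_of_le hek with h0 | h0
    · have := (τ a).isLt
      omega
    · have he1 : 1 ≤ e := by omega
      have hasc := asc_of_cut e he1 hes.2 h0
      have hbp := (breakpoint τ hC (by omega : e - 1 + 1 < k)
        (by
          have heq : (⟨e-1+1, by omega⟩ : Fin k) = ⟨e, h0⟩ := Fin.ext (by simp; omega)
          rw [heq]
          exact hasc)).1
      have := hbp a (by omega)
      omega
  have hsltk : s < k := by omega
  have chain : ∀ d : ℕ, ∀ hd : s + d < e,
      (τ ⟨s + d, by omega⟩ : ℕ) + (s + d) = (τ ⟨s, hsltk⟩ : ℕ) + s := by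
    intro d
    induction d with
    | zero => intro hd; simp
    | succ d ihd =>
      intro hd
      have hd' : s + d < e := by omega
      have ih := ihd hd'
      have hnocut : ¬ cutP D (s + d + 1) := by
        refine nocut D (i := (i : ℕ)) ?_ ?_
        · rw [hs]; omega
        · rw [he]; omega
      have hmem : s + d ∈ D := by
        unfold cutP at hnocut
        push_neg at hnocut
        simpa using hnocut.2
      rw [hDdef, mem_descSet τ (by omega : s + d + 1 < k)] at hmem
      have hinv : τ ⟨s+d+1, by omega⟩ < τ ⟨s+d, by omega⟩ := by
        rw [Fin.lt_def]; exact hmem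
      have hlt : (⟨s+d, by omega⟩ : Fin k) < ⟨s+d+1, by omega⟩ := by
        rw [Fin.lt_def]; simp
      have hCab := hC ⟨s+d, by omega⟩ ⟨s+d+1, by omega⟩ hlt hinv
      simp only [Fin.val_mk] at hCab ih ⊢
      have heq : (⟨s + (d+1), by omega⟩ : Fin k) = ⟨s + d + 1, by omega⟩ := Fin.ext (by simp; omega)
      rw [heq]
      omega
  have hIs : s ≤ (i : ℕ) := hss.1
  have hIe : (i : ℕ) < e := hes.1
  have hc_i := chain ((i : ℕ) - s) (by omega)
  have heqi : (⟨s + ((i:ℕ) - s), by omega⟩ : Fin k) = i := Fin.ext (by simp; omega)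
  rw [heqi] at hc_i
  have hc_e := chain (e - 1 - s) (by omega)
  have heqe : (⟨s + (e - 1 - s), by omega⟩ : Fin k) = ⟨e-1, by omega⟩ := Fin.ext (by simp; omega)
  rw [heqe] at hc_e
  have hb1 := fact1 ⟨s, by omega⟩ (by simp)
  have hb2 := fact1 ⟨e-1, by omega⟩ (by simp; omega)
  have hb3 := fact2 ⟨s, by omega⟩ (by simp; omega)
  have hb4 := fact2 ⟨e-1, by omega⟩ (by simp; omega)
  unfold fF
  rw [hs, he]
  omega

open scoped Classical

-- ============ counting ============

lemma count_C {k : ℕ} (hk : 1 ≤ k) :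
    (Finset.univ.filter fun τ : Equiv.Perm (Fin k) => Cword ⇑τ).card = 2 ^ (k - 1) := by
  classical
  have hbij : ((range (k-1)).powerset).card
      = (Finset.univ.filter fun τ : Equiv.Perm (Fin k) => Cword ⇑τ).card := by
    refine Finset.card_bij' (fun D hD => FD D (mem_powerset.mp hD))
      (fun τ _ => descSet τ) ?_ ?_ ?_ ?_
    · intro D hD
      rw [mem_filter]
      exact ⟨mem_univ _, FD_cword (mem_powerset.mp hD)⟩
    · intro τ _
      exact mem_powerset.mpr (descSet_subset τ)
    · -- left inverse : descSet (FD D hD) = D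
      intro D hD
      have hD' := mem_powerset.mp hD
      ext x
      constructor
      · intro hx
        have hxr : x ∈ range (k-1) := descSet_subset _ hx
        have hx1 : x + 1 < k := by have := mem_range.mp hxr; omega
        rw [mem_descSet _ hx1] at hx
        rw [FD_apply, FD_apply] at hx
        exact (FD_descent hD' x hx1).mp hx
      · intro hx
        have hxr : x ∈ range (k-1) := hD' hx
        have hx1 : x + 1 < k := by have := mem_range.mp hxr; omega
        rw [mem_descSet _ hx1, FD_apply, FD_apply]
        exact (FD_descent hD' x hx1).mpr hx
    · -- right inverse : FD (descSet τ) _ = τ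
      intro τ hτ
      rw [mem_filter] at hτ
      apply Equiv.ext
      intro x
      apply Fin.ext
      rw [FD_apply]
      exact (cword_formula τ hτ.2 x).symm
  rw [← hbij, Finset.card_powerset, Finset.card_range]

theorem count_full_jset {k : ℕ} (hk : 1 ≤ k) :
    (Finset.univ.filter fun τ : Equiv.Perm (Fin k) => JSet τ = {j | j ≤ k}).card
      = 2 ^ (k - 1) := by
  have hiff : ∀ τ : Equiv.Perm (Fin k), (JSet τ = {j | j ≤ k}) ↔ Cword ⇑τ := by
    intro τ
    constructor
    · intro h
      apply full_j_to_C
      intro j h1 hjk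
      have hmem : j ∈ JSet τ := by rw [h]; exact hjk
      rcases hmem with h0 | h2
      · simp only [Set.mem_singleton_iff] at h0
        omega
      · exact h2.2
    · intro hC
      apply Set.ext
      intro x
      constructor
      · rintro (h0 | ⟨h1, hjk, -⟩)
        · simp only [Set.mem_singleton_iff] at h0
          subst h0
          exact Nat.zero_le k
        · exact hjk
      · intro hx
        rcases Nat.eq_zero_or_pos x with h0 | h0
        · exact Or.inl h0
        · exact Or.inr ⟨h0, cword_initPattern τ hC hx⟩
  have : (Finset.univ.filter fun τ : Equiv.Perm (Fin k) => JSet τ = {j | j ≤ k})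
      = (Finset.univ.filter fun τ : Equiv.Perm (Fin k) => Cword ⇑τ) := by
    apply Finset.filter_congr
    intro τ _
    exact hiff τ
  rw [this, count_C hk]
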